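/- arXiv:1509.06646 — 3 statements merged into one kernel-verified Lean document; each statement's English description precedes it below -/
import Mathlib

section
/- Let σ be a permutation of Fin n with permutation matrix P and let A be an n×n matrix over a commutative ring R. Then the leading coefficient of det(A + u • P), i.e., the coefficient of u^n, equals the sign of σ. -/
open Polynomial

theorem leading_coeff_eq_sign (R : Type*) [CommRing R] (n : ℕ)
    (σ : Equiv.Perm (Fin n)) (A : Matrix (Fin n) (Fin n) R) :
    ((A.map (Polynomial.C) + (Polynomial.X : R[X]) • (σ.permMatrix R).map Polynomial.C).det).coeff n
      = ((Equiv.Perm.sign σ : ℤ) : R) := by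
  have h := Polynomial.coeff_det_X_add_C_card (σ.permMatrix R) A
  rw [Fintype.card_fin, Matrix.det_permutation, add_comm] at h
  rw [h]
end

section
/- For an n×n matrix M over a commutative ring, the coefficient of u^{n-k} in det(u • I_n + M) equals the sum, over all k-element subsets α of Fin n, of the principal minors det(M[α; α]). -/
open Polynomial

lemma det_piecewise_one_aux {A : Type*} [CommRing A] {n : ℕ}
    (N : Matrix (Fin n) (Fin n) A) (s : Finset (Fin n)) :
    (Matrix.of (s.piecewise (fun i => N i) (fun i => (1 : Matrix (Fin n) (Fin n) A) i))).det
      = (N.submatrix (fun i : s => (i : Fin n)) (fun j : s => (j : Fin n))).det := by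
  classical
  let e : {x // x ∈ s} ⊕ {x // x ∉ s} ≃ Fin n := Equiv.sumCompl (· ∈ s)
  have h := Matrix.det_submatrix_equiv_self e (Matrix.of (s.piecewise (fun i => N i) (fun i => (1 : Matrix (Fin n) (Fin n) A) i)))
  rw [← h]
  have hblock : (Matrix.of (s.piecewise (fun i => N i) (fun i => (1 : Matrix (Fin n) (Fin n) A) i))).submatrix e e
      = Matrix.fromBlocks (N.submatrix (fun i : s => (i : Fin n)) (fun j : s => (j : Fin n)))
          (N.submatrix (fun i : s => (i : Fin n)) (fun j : {x // x ∉ s} => (j : Fin n)))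
          0 1 := by
    ext i j
    cases i with
    | inl i =>
      cases j with
      | inl j => simp [e, Finset.piecewise, i.2]
      | inr j => simp [e, Finset.piecewise, i.2]
    | inr i =>
      cases j with
      | inl j =>
        have hij : (i : Fin n) ≠ (j : Fin n) := fun h => i.2 (h ▸ j.2)
        simp [e, Finset.piecewise, i.2, Matrix.one_apply, hij]
      | inr j =>
        simp [e, Finset.piecewise, i.2, Matrix.one_apply, Subtype.ext_iff]
  rw [hblock, Matrix.det_fromBlocks_zero₂₁, Matrix.det_one, mul_one]

theorem coeff_det_X_smul_one_add (R : Type*) [CommRing R] (n : ℕ)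
    (M : Matrix (Fin n) (Fin n) R) (k : ℕ) (hk : k ≤ n) :
    (((Polynomial.X : R[X]) • (1 : Matrix (Fin n) (Fin n) R[X]) + M.map Polynomial.C).det).coeff (n - k)
      = ∑ s ∈ Finset.powersetCard k (Finset.univ : Finset (Fin n)),
          (M.submatrix (fun i : s => (i : Fin n)) (fun j : s => (j : Fin n))).det := by
  classical
  set f := (Matrix.detRowAlternating : (Fin n → R[X]) [⋀^Fin n]→ₗ[R[X]] R[X]) with hf
  have hdet : ((X : R[X]) • (1 : Matrix (Fin n) (Fin n) R[X]) + M.map C).det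
      = ∑ s : Finset (Fin n), (X : R[X]) ^ (n - s.card)
          * C ((M.submatrix (fun i : s => (i : Fin n)) (fun j : s => (j : Fin n))).det) := by
    have h1 : ((X : R[X]) • (1 : Matrix (Fin n) (Fin n) R[X]) + M.map C).det
        = f ((fun i => (M.map C) i) + (fun i => ((X : R[X]) • (1 : Matrix (Fin n) (Fin n) R[X])) i)) := by
      rw [add_comm ((fun i => (M.map C) i))]
      rfl
    rw [h1, show f ((fun i => (M.map C) i) + fun i => ((X : R[X]) • (1 : Matrix (Fin n) (Fin n) R[X])) i)
        = ∑ s : Finset (Fin n), f (s.piecewise (fun i => (M.map C) i)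
            (fun i => ((X : R[X]) • (1 : Matrix (Fin n) (Fin n) R[X])) i))
      from f.toMultilinearMap.map_add_univ _ _]
    refine Finset.sum_congr rfl fun s _ => ?_
    set m : Fin n → Fin n → R[X] :=
      s.piecewise ((fun i => (M.map C) i)) ((fun i => (1 : Matrix (Fin n) (Fin n) R[X]) i)) with hm
    have hpw : s.piecewise ((fun i => (M.map C) i)) ((fun i => ((X : R[X]) • (1 : Matrix (Fin n) (Fin n) R[X])) i))
        = sᶜ.piecewise (fun i => (X : R[X]) • m i) m := by
      funext i j
      by_cases hi : i ∈ s <;>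
        simp [Finset.piecewise, hi, hm, Matrix.smul_apply]
    rw [hpw]
    rw [show f (sᶜ.piecewise (fun i => (X : R[X]) • m i) m)
        = (∏ _i ∈ sᶜ, (X : R[X])) • f m
      from f.toMultilinearMap.map_piecewise_smul (fun _ => (X : R[X])) m sᶜ]
    have h3 : f m = (Matrix.of m).det := rfl
    rw [Finset.prod_const, Finset.card_compl, Fintype.card_fin, h3, hm,
      det_piecewise_one_aux, Matrix.submatrix_map, smul_eq_mul,
      ← RingHom.mapMatrix_apply, ← RingHom.map_det]
  rw [hdet, Polynomial.finset_sum_coeff]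
  have hcoeff : ∀ s : Finset (Fin n),
      ((X : R[X]) ^ (n - s.card)
        * C ((M.submatrix (fun i : s => (i : Fin n)) (fun j : s => (j : Fin n))).det)).coeff (n - k)
      = if s.card = k
        then (M.submatrix (fun i : s => (i : Fin n)) (fun j : s => (j : Fin n))).det else 0 := by
    intro s
    rw [mul_comm, Polynomial.C_mul_X_pow_eq_monomial, Polynomial.coeff_monomial]
    have hcard : s.card ≤ n := by simpa using Finset.card_le_univ s
    by_cases h : s.card = k
    · simp [h]
    · have : n - s.card ≠ n - k := by omega
      simp [this, h]
  simp_rw [hcoeff]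
  rw [Finset.powersetCard_eq_filter, ← Finset.powerset_univ, Finset.sum_filter]
end

section
/- Let τ be the fixed-point-free involution on Fin m ⊕ Fin m swapping the two copies, with permutation matrix J, and suppose a matrix T over a commutative ring satisfies Tᵀ = J * T * J. Then for every k, the sum over all k-element subsets α of the minors det(T[α; τ(α)]) (rows α, columns the τ-image of α, in corresponding order) is invariant under replacing T by Tᵀ. -/
theorem semi_principal_minors_transpose_invariant (R : Type*) [CommRing R] (m : ℕ)
    (T : Matrix (Fin m ⊕ Fin m) (Fin m ⊕ Fin m) R)
    (hT : T.transpose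
      = Equiv.Perm.permMatrix R (Equiv.sumComm (Fin m) (Fin m)) * T
          * Equiv.Perm.permMatrix R (Equiv.sumComm (Fin m) (Fin m))) :
    ∀ k : ℕ,
    ∑ s ∈ Finset.powersetCard k (Finset.univ : Finset (Fin m ⊕ Fin m)),
        (T.submatrix (fun i : s => (i : Fin m ⊕ Fin m))
          (fun i : s => Equiv.sumComm (Fin m) (Fin m) (i : Fin m ⊕ Fin m))).det
      = ∑ s ∈ Finset.powersetCard k (Finset.univ : Finset (Fin m ⊕ Fin m)),
        (T.transpose.submatrix (fun i : s => (i : Fin m ⊕ Fin m))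
          (fun i : s => Equiv.sumComm (Fin m) (Fin m) (i : Fin m ⊕ Fin m))).det := by
  intro k
  set τ : Fin m ⊕ Fin m ≃ Fin m ⊕ Fin m := Equiv.sumComm (Fin m) (Fin m) with hτ
  have hττ : ∀ x, τ (τ x) = x := fun x => Sum.swap_swap x
  have key : ∀ i j, T.transpose i j = T (τ i) (τ j) := by
    intro i j
    rw [hT, Equiv.Perm.permMatrix, PEquiv.toMatrix_toPEquiv_mul,
      PEquiv.mul_toMatrix_toPEquiv]
    simp [τ]
  -- reindex the sum on the left via s ↦ s.image τ
  apply Finset.sum_nbij' (fun s => s.image τ) (fun s => s.image τ)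
  · intro s hs
    simp only [Finset.mem_powersetCard_univ] at hs ⊢
    rw [Finset.card_image_of_injective _ τ.injective, hs]
  · intro s hs
    simp only [Finset.mem_powersetCard_univ] at hs ⊢
    rw [Finset.card_image_of_injective _ τ.injective, hs]
  · intro s _
    rw [Finset.image_image, show ⇑τ ∘ ⇑τ = id from funext hττ, Finset.image_id]
  · intro s _
    rw [Finset.image_image, show ⇑τ ∘ ⇑τ = id from funext hττ, Finset.image_id]
  · intro s hs
    let e : {x // x ∈ s} ≃ {x // x ∈ s.image τ} :=
      { toFun := fun i => ⟨τ i, Finset.mem_image_of_mem τ i.2⟩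
        invFun := fun i => ⟨τ i, by
          obtain ⟨a, ha, hai⟩ := Finset.mem_image.mp i.2
          rw [← hai, hττ]; exact ha⟩
        left_inv := fun i => Subtype.ext (hττ i)
        right_inv := fun i => Subtype.ext (hττ i) }
    rw [← Matrix.det_submatrix_equiv_self e
      (T.transpose.submatrix (fun i : s.image τ => (i : Fin m ⊕ Fin m))
        (fun i : s.image τ => τ (i : Fin m ⊕ Fin m)))]
    have he : ∀ i : {x // x ∈ s}, ((e i : Fin m ⊕ Fin m)) = τ i := fun i => rfl
    congr 1
    ext i j
    simp only [Matrix.submatrix_apply, he, key, hττ]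
end
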